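/- Let d ∈ ℕ with d ≥ 2, κ ∈ ℝ \ {0}, and Λ ∈ ℝ. Let X_1, …, X_d : ℝ → ℝ be twice differentiable with X_l(t) > 0 for all t, let φ be differentiable, and let ρ, p : ℝ → ℝ and V : ℝ → ℝ satisfy the Bianchi I Einstein equations (I_0), (I_1), …, (I_d) for all t ∈ ℝ. Let θ > 0, let σ satisfy σ'(t) = 1/(θ X_1(t)⋯X_d(t)) for all t with differentiable inverse g (g(σ(t)) = t). Then: (a) the function t ↦ −(θ²/(d−1)) X_1(t)²⋯X_d(t)² · Σ_{1≤l<k≤d}(H_l(t) − H_k(t))² is constant on ℝ, where H_l = X_l'/X_l; write its value as E. (b) With u(s) = 1/(X_1⋯X_d)(g(s)), ψ = φ∘g, P(s) = (dκ/(d−1)) ψ'(s)², ρ̃ = ρ∘g, and p̃ = p∘g, for every t ∈ ℝ, at s = σ(t) the function u is twice differentiable and satisfies u''(s) + [E − P(s)]u(s) = θ²dκ(ρ̃(s) + p̃(s))/((d−1) u(s)). -/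

import Mathlib

open Finset

lemma aux_tri {d : ℕ} (i : Fin d) (f : Fin d → ℝ) :
    ∑ k, f k = (∑ k ∈ Finset.Iio i, f k) + f i + ∑ k ∈ Finset.Ioi i, f k := by
  classical
  have h : ∀ k, f k = (if k < i then f k else 0) + (if k = i then f k else 0)
      + (if i < k then f k else 0) := by
    intro k
    rcases lt_trichotomy k i with h | h | h
    · simp [h, h.ne, asymm h]
    · simp [h]
    · simp [h, h.ne', asymm h]
  calc ∑ k, f k = ∑ k, ((if k < i then f k else 0) + (if k = i then f k else 0)
      + (if i < k then f k else 0)) := Finset.sum_congr rfl fun k _ => h k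
  _ = (∑ k ∈ Finset.Iio i, f k) + f i + ∑ k ∈ Finset.Ioi i, f k := by
      rw [Finset.sum_add_distrib, Finset.sum_add_distrib, Finset.sum_ite_eq' Finset.univ i f]
      have e1 : (∑ k, if k < i then f k else 0) = ∑ k ∈ Finset.Iio i, f k := by
        rw [← Finset.sum_filter]; congr 1; ext k; simp
      have e2 : (∑ k, if i < k then f k else 0) = ∑ k ∈ Finset.Ioi i, f k := by
        rw [← Finset.sum_filter]; congr 1; ext k; simp
      rw [e1, e2]
      simp

lemma aux_master {d : ℕ} (G : Fin d → Fin d → ℝ) :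
    ∑ pr ∈ Finset.univ.filter (fun pr : Fin d × Fin d => pr.1 < pr.2), G pr.1 pr.2
      = ∑ l, ∑ k ∈ Finset.Ioi l, G l k := by
  rw [Finset.sum_filter, ← Finset.univ_product_univ, Finset.sum_product]
  refine Finset.sum_congr rfl fun l _ => ?_
  rw [← Finset.sum_filter]
  congr 1
  ext k
  simp

lemma aux_swap {d : ℕ} (G : Fin d → Fin d → ℝ) :
    ∑ l, ∑ k ∈ Finset.Ioi l, G l k = ∑ k, ∑ l ∈ Finset.Iio k, G l k := by
  have h1 : ∀ l : Fin d, ∑ k ∈ Finset.Ioi l, G l k = ∑ k, if l < k then G l k else 0 := by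
    intro l; rw [← Finset.sum_filter]; congr 1; ext k; simp
  have h2 : ∀ k : Fin d, ∑ l ∈ Finset.Iio k, G l k = ∑ l, if l < k then G l k else 0 := by
    intro k; rw [← Finset.sum_filter]; congr 1; ext l; simp
  simp only [h1, h2]
  exact Finset.sum_comm

lemma aux_cnt {d : ℕ} (i : Fin d) :
    ((Finset.Iio i).card : ℝ) + (Finset.Ioi i).card + 1 = d := by
  have h := aux_tri i (fun _ => (1 : ℝ))
  simp only [Finset.sum_const, nsmul_eq_mul, mul_one, Finset.card_univ,
    Fintype.card_fin] at h
  linarith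

lemma aux_sq {d : ℕ} (f : Fin d → ℝ) :
    (∑ l, f l) ^ 2 = (∑ l, f l ^ 2) + 2 * ∑ l, ∑ k ∈ Finset.Ioi l, f l * f k := by
  have h0 : (∑ l, f l) ^ 2 = ∑ l, ∑ k, f l * f k := by
    rw [pow_two, Finset.sum_mul_sum]
  have h1 : ∀ l, ∑ k, f l * f k
      = (∑ k ∈ Finset.Iio l, f l * f k) + f l * f l + ∑ k ∈ Finset.Ioi l, f l * f k :=
    fun l => aux_tri l (fun k => f l * f k)
  have h2 : ∑ l, ∑ k ∈ Finset.Iio l, f l * f k = ∑ l, ∑ k ∈ Finset.Ioi l, f l * f k := by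
    have := aux_swap (fun l k => f k * f l)
    rw [← this]
    refine Finset.sum_congr rfl fun l _ => Finset.sum_congr rfl fun k _ => mul_comm _ _
  calc (∑ l, f l) ^ 2 = ∑ l, ((∑ k ∈ Finset.Iio l, f l * f k) + f l * f l
        + ∑ k ∈ Finset.Ioi l, f l * f k) := by
        rw [h0]; exact Finset.sum_congr rfl fun l _ => h1 l
    _ = (∑ l, ∑ k ∈ Finset.Iio l, f l * f k) + (∑ l, f l * f l)
        + ∑ l, ∑ k ∈ Finset.Ioi l, f l * f k := by
        rw [Finset.sum_add_distrib, Finset.sum_add_distrib]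
    _ = (∑ l, f l ^ 2) + 2 * ∑ l, ∑ k ∈ Finset.Ioi l, f l * f k := by
        rw [h2]
        have : (∑ l, f l * f l) = ∑ l, f l ^ 2 :=
          Finset.sum_congr rfl fun l _ => (pow_two (f l)).symm
        rw [this]; ring

lemma aux_sqdiff {d : ℕ} (f : Fin d → ℝ) :
    ∑ pr ∈ Finset.univ.filter (fun pr : Fin d × Fin d => pr.1 < pr.2),
        (f pr.1 - f pr.2) ^ 2
      = ((d : ℝ) - 1) * (∑ l, f l ^ 2)
        - 2 * ∑ pr ∈ Finset.univ.filter (fun pr : Fin d × Fin d => pr.1 < pr.2),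
            f pr.1 * f pr.2 := by
  rw [aux_master (fun l k => (f l - f k) ^ 2), aux_master (fun l k => f l * f k)]
  have h1 : ∀ l : Fin d, ∀ k : Fin d, (f l - f k) ^ 2
      = f l ^ 2 + f k ^ 2 - 2 * (f l * f k) := by intros; ring
  simp only [h1]
  have hsplit : ∑ l, ∑ k ∈ Finset.Ioi l, (f l ^ 2 + f k ^ 2 - 2 * (f l * f k))
      = (∑ l, ∑ k ∈ Finset.Ioi l, f l ^ 2) + (∑ l, ∑ k ∈ Finset.Ioi l, f k ^ 2)
        - 2 * ∑ l, ∑ k ∈ Finset.Ioi l, f l * f k := by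
    simp only [Finset.sum_sub_distrib, Finset.sum_add_distrib, Finset.mul_sum]
  rw [hsplit]
  have h2 : ∑ l, ∑ k ∈ Finset.Ioi l, f k ^ 2 = ∑ l, ((Finset.Iio l).card : ℝ) * f l ^ 2 := by
    rw [aux_swap (fun l k => f k ^ 2)]
    refine Finset.sum_congr rfl fun l _ => ?_
    rw [Finset.sum_const, nsmul_eq_mul]
  have h3 : ∑ l, ∑ k ∈ Finset.Ioi l, f l ^ 2 = ∑ l, ((Finset.Ioi l).card : ℝ) * f l ^ 2 := by
    refine Finset.sum_congr rfl fun l _ => ?_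
    rw [Finset.sum_const, nsmul_eq_mul]
  rw [h2, h3]
  congr 1
  rw [← Finset.sum_add_distrib, Finset.mul_sum]
  refine Finset.sum_congr rfl fun l _ => ?_
  have := aux_cnt l
  nlinarith [aux_cnt l]

lemma aux_avoid {d : ℕ} (f : Fin d → ℝ) (i : Fin d) :
    ∑ pr ∈ Finset.univ.filter
        (fun pr : Fin d × Fin d => pr.1 < pr.2 ∧ pr.1 ≠ i ∧ pr.2 ≠ i),
        f pr.1 * f pr.2
      = (∑ pr ∈ Finset.univ.filter (fun pr : Fin d × Fin d => pr.1 < pr.2),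
          f pr.1 * f pr.2)
        - f i * ((∑ l, f l) - f i) := by
  classical
  have hL : ∑ pr ∈ Finset.univ.filter
        (fun pr : Fin d × Fin d => pr.1 < pr.2 ∧ pr.1 ≠ i ∧ pr.2 ≠ i),
        f pr.1 * f pr.2
      = ∑ pr ∈ Finset.univ.filter (fun pr : Fin d × Fin d => pr.1 < pr.2),
          (if pr.1 ≠ i ∧ pr.2 ≠ i then f pr.1 * f pr.2 else 0) := by
    rw [Finset.sum_filter, Finset.sum_filter]
    refine Finset.sum_congr rfl fun pr _ => ?_
    by_cases h1 : pr.1 < pr.2 <;> by_cases h2 : pr.1 ≠ i ∧ pr.2 ≠ i <;> simp [h1, h2]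
  rw [hL, aux_master (fun l k => if l ≠ i ∧ k ≠ i then f l * f k else 0),
    aux_master (fun l k => f l * f k)]
  have step : ∀ l : Fin d, ∑ k ∈ Finset.Ioi l, (if l ≠ i ∧ k ≠ i then f l * f k else 0)
      = ∑ k ∈ Finset.Ioi l, (f l * f k - (if l = i then f l * f k else 0)
          - (if k = i then f l * f k else 0)) := by
    intro l
    refine Finset.sum_congr rfl fun k hk => ?_
    have hlk : l ≠ k := (Finset.mem_Ioi.mp hk).ne
    by_cases h1 : l = i <;> by_cases h2 : k = i
    · exact absurd (h1.trans h2.symm) hlk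
    · simp [h1, h2]
    · simp [h1, h2]
    · simp [h1, h2]
  simp only [step]
  simp only [Finset.sum_sub_distrib]
  have e1 : ∑ l, ∑ k ∈ Finset.Ioi l, (if l = i then f l * f k else 0)
      = ∑ k ∈ Finset.Ioi i, f i * f k := by
    have : ∀ l : Fin d, ∑ k ∈ Finset.Ioi l, (if l = i then f l * f k else 0)
        = if l = i then ∑ k ∈ Finset.Ioi l, f l * f k else 0 := by
      intro l; by_cases h : l = i <;> simp [h]
    simp only [this]
    rw [Finset.sum_ite_eq' Finset.univ i (fun l => ∑ k ∈ Finset.Ioi l, f l * f k)]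
    simp
  have e2 : ∑ l, ∑ k ∈ Finset.Ioi l, (if k = i then f l * f k else 0)
      = ∑ l ∈ Finset.Iio i, f l * f i := by
    have : ∀ l : Fin d, ∑ k ∈ Finset.Ioi l, (if k = i then f l * f k else 0)
        = if l < i then f l * f i else 0 := by
      intro l
      rw [Finset.sum_ite_eq' (Finset.Ioi l) i (fun k => f l * f k)]
      simp [Finset.mem_Ioi]
    simp only [this]
    rw [← Finset.sum_filter]
    congr 1
    ext l; simp
  rw [e1, e2]
  have comm : ∑ l ∈ Finset.Iio i, f l * f i = ∑ l ∈ Finset.Iio i, f i * f l :=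
    Finset.sum_congr rfl fun l _ => mul_comm _ _
  rw [comm, ← Finset.mul_sum, ← Finset.mul_sum, aux_tri i f]
  ring

/-- Bianchi I Einstein equations imply a Schrödinger-type equation. -/
theorem stmt_14
    (d : ℕ) (hd : 2 ≤ d) (κ Λ : ℝ) (hκ : κ ≠ 0)
    (X : Fin d → ℝ → ℝ) (φ ρ p V : ℝ → ℝ)
    (hX : ∀ l, Differentiable ℝ (X l)) (hX' : ∀ l, Differentiable ℝ (deriv (X l)))
    (hXpos : ∀ l t, 0 < X l t)
    (hφ : Differentiable ℝ φ)
    (H : Fin d → ℝ → ℝ) (hH : ∀ l t, H l t = deriv (X l) t / X l t)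
    (hI0 : ∀ t, (∑ pr ∈ Finset.univ.filter (fun pr : Fin d × Fin d => pr.1 < pr.2),
          H pr.1 t * H pr.2 t)
        = κ * ((deriv φ t) ^ 2 / 2 + V (φ t) + ρ t) + Λ)
    (hIi : ∀ i : Fin d, ∀ t,
        (∑ l ∈ Finset.univ.filter (fun l => l ≠ i), (deriv (H l) t + H l t ^ 2))
          + (∑ pr ∈ Finset.univ.filter
              (fun pr : Fin d × Fin d => pr.1 < pr.2 ∧ pr.1 ≠ i ∧ pr.2 ≠ i),
              H pr.1 t * H pr.2 t)
        = -κ * ((deriv φ t) ^ 2 / 2 - V (φ t) + p t) + Λ)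
    (θ : ℝ) (hθ : 0 < θ)
    (σ g : ℝ → ℝ)
    (hσ : ∀ t, deriv σ t = 1 / (θ * ∏ l, X l t))
    (hg : Differentiable ℝ g) (hgσ : ∀ t, g (σ t) = t)
    (u ψ P : ℝ → ℝ)
    (hu : ∀ s, u s = 1 / ∏ l, X l (g s))
    (hψ : ∀ s, ψ s = φ (g s))
    (hP : ∀ s, P s = ((d : ℝ) * κ / ((d : ℝ) - 1)) * (deriv ψ s) ^ 2) :
    (∀ t₁ t₂,
      -(θ ^ 2 / ((d : ℝ) - 1)) * (∏ l, X l t₁) ^ 2 *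
          (∑ pr ∈ Finset.univ.filter (fun pr : Fin d × Fin d => pr.1 < pr.2),
            (H pr.1 t₁ - H pr.2 t₁) ^ 2)
        = -(θ ^ 2 / ((d : ℝ) - 1)) * (∏ l, X l t₂) ^ 2 *
          (∑ pr ∈ Finset.univ.filter (fun pr : Fin d × Fin d => pr.1 < pr.2),
            (H pr.1 t₂ - H pr.2 t₂) ^ 2)) ∧
    ∀ E : ℝ,
      (∀ t, -(θ ^ 2 / ((d : ℝ) - 1)) * (∏ l, X l t) ^ 2 *
          (∑ pr ∈ Finset.univ.filter (fun pr : Fin d × Fin d => pr.1 < pr.2),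
            (H pr.1 t - H pr.2 t) ^ 2) = E) →
      ∀ t, DifferentiableAt ℝ u (σ t) ∧ DifferentiableAt ℝ (deriv u) (σ t) ∧
        deriv (deriv u) (σ t) + (E - P (σ t)) * u (σ t)
          = θ ^ 2 * (d : ℝ) * κ * (ρ (g (σ t)) + p (g (σ t)))
              / (((d : ℝ) - 1) * u (σ t)) := by
  classical
  have hd1 : (1 : ℝ) < (d : ℝ) := by exact_mod_cast Nat.lt_of_lt_of_le Nat.one_lt_two hd
  set F : ℝ → ℝ := fun t => ∏ l, X l t with hFdef
  set S : ℝ → ℝ := fun t => ∑ l, H l t with hSdef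
  have hFpos : ∀ t, 0 < F t := fun t => Finset.prod_pos fun l _ => hXpos l t
  have hXne : ∀ l t, X l t ≠ 0 := fun l t => (hXpos l t).ne'
  have hHfun : ∀ l, H l = fun t => deriv (X l) t / X l t := fun l => funext (hH l)
  have hHdiff : ∀ l, Differentiable ℝ (H l) := by
    intro l; rw [hHfun l]; exact (hX' l).div (hX l) (fun t => hXne l t)
  have hFder : ∀ t, HasDerivAt F (F t * S t) t := by
    intro t
    have h := HasDerivAt.fun_finsetProd (u := Finset.univ) (f := X)
      (f' := fun l => deriv (X l) t) (x := t) (fun l _ => ((hX l) t).hasDerivAt)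
    refine h.congr_deriv (Eq.symm ?_)
    rw [hSdef, Finset.mul_sum]
    refine Finset.sum_congr rfl fun l _ => ?_
    rw [smul_eq_mul, hH l t]
    have he : (∏ j ∈ Finset.univ.erase l, X j t) * X l t = F t :=
      Finset.prod_erase_mul _ _ (Finset.mem_univ l)
    field_simp [hXne l t]
    rw [← he]; ring
  have hFdiff : Differentiable ℝ F := fun t => (hFder t).differentiableAt
  have hSder : ∀ t, HasDerivAt S (∑ l, deriv (H l) t) t :=
    fun t => HasDerivAt.fun_sum (fun l _ => ((hHdiff l) t).hasDerivAt)
  have hErase : ∀ (i : Fin d) t,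
      (∑ l ∈ Finset.univ.filter (fun l => l ≠ i), (deriv (H l) t + H l t ^ 2))
        = (∑ l, (deriv (H l) t + H l t ^ 2)) - (deriv (H i) t + H i t ^ 2) := by
    intro i t
    rw [Finset.filter_ne']
    have := Finset.add_sum_erase Finset.univ
      (fun l => deriv (H l) t + H l t ^ 2) (Finset.mem_univ i)
    linarith
  have hAvoid : ∀ (i : Fin d) t,
      (∑ pr ∈ Finset.univ.filter
          (fun pr : Fin d × Fin d => pr.1 < pr.2 ∧ pr.1 ≠ i ∧ pr.2 ≠ i),
          H pr.1 t * H pr.2 t)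
        = (∑ pr ∈ Finset.univ.filter (fun pr : Fin d × Fin d => pr.1 < pr.2),
            H pr.1 t * H pr.2 t) - H i t * (S t - H i t) :=
    fun i t => aux_avoid (fun l => H l t) i
  have key : ∀ (l k : Fin d) t,
      deriv (H l) t + H l t * S t = deriv (H k) t + H k t * S t := by
    intro l k t
    have h1 := hIi l t
    have h2 := hIi k t
    rw [hErase l t, hAvoid l t] at h1
    rw [hErase k t, hAvoid k t] at h2
    have h3 := h1.trans h2.symm
    linear_combination -h3
  have hconst : ∀ (l k : Fin d) (t₁ t₂ : ℝ),
      F t₁ * (H l t₁ - H k t₁) = F t₂ * (H l t₂ - H k t₂) := by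
    intro l k
    apply is_const_of_deriv_eq_zero
    · exact hFdiff.mul ((hHdiff l).sub (hHdiff k))
    · intro t
      have hG : HasDerivAt (fun t => F t * (H l t - H k t))
          (F t * S t * (H l t - H k t)
            + F t * (deriv (H l) t - deriv (H k) t)) t := by
        have := (hFder t).mul (((hHdiff l t).hasDerivAt).sub ((hHdiff k t).hasDerivAt))
        exact this
      rw [hG.deriv]
      linear_combination F t * key l k t
  have hFt : ∀ t, (∏ l, X l t) = F t := fun _ => rfl
  constructor
  · intro t₁ t₂
    have hsum : ∀ t : ℝ, F t ^ 2 *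
        (∑ pr ∈ Finset.univ.filter (fun pr : Fin d × Fin d => pr.1 < pr.2),
          (H pr.1 t - H pr.2 t) ^ 2)
        = ∑ pr ∈ Finset.univ.filter (fun pr : Fin d × Fin d => pr.1 < pr.2),
            (F t * (H pr.1 t - H pr.2 t)) ^ 2 := by
      intro t
      rw [Finset.mul_sum]
      exact Finset.sum_congr rfl fun pr _ => by ring
    rw [hFt t₁, hFt t₂, mul_assoc, mul_assoc, hsum t₁, hsum t₂]
    congr 1
    exact Finset.sum_congr rfl fun pr _ => by rw [hconst pr.1 pr.2 t₁ t₂]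
  · intro E hE t
    have hσder : ∀ t, HasDerivAt σ (1 / (θ * F t)) t := by
      intro t
      have hne : deriv σ t ≠ 0 := by
        rw [hσ t, hFt t]; exact one_div_ne_zero (mul_pos hθ (hFpos t)).ne'
      have hdiff : DifferentiableAt ℝ σ t := by
        by_contra h; exact hne (deriv_zero_of_not_differentiableAt h)
      have h2 := hdiff.hasDerivAt
      rw [hσ t, hFt t] at h2
      exact h2
    have hσmono : StrictMono σ :=
      strictMono_of_deriv_pos fun t => by
        rw [hσ t, hFt t]; exact one_div_pos.mpr (mul_pos hθ (hFpos t))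
    have hθF : ∀ t, θ * F t ≠ 0 := fun t => (mul_pos hθ (hFpos t)).ne'
    have hgder : ∀ t, HasDerivAt g (θ * F t) (σ t) := by
      intro t
      have h1 : HasDerivAt (fun x => g (σ x)) (deriv g (σ t) * (1 / (θ * F t))) t :=
        ((hg (σ t)).hasDerivAt).comp t (hσder t)
      have h2 : (fun x => g (σ x)) = fun x => x := funext hgσ
      rw [h2] at h1
      have h3 : deriv g (σ t) * (1 / (θ * F t)) = 1 := h1.unique (hasDerivAt_id t)
      have h4 : deriv g (σ t) = θ * F t := by
        field_simp at h3
        rw [div_eq_iff (hFpos t).ne'] at h3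
        linarith
      rw [← h4]; exact (hg (σ t)).hasDerivAt
    have hufun : u = fun s => (F (g s))⁻¹ := funext fun s => by rw [hu s, one_div]
    have hu1 : ∀ t', HasDerivAt u (-θ * S t') (σ t') := by
      intro t'
      have hcomp : HasDerivAt (fun s => F (g s)) (F t' * S t' * (θ * F t')) (σ t') := by
        have h1 := (hFder (g (σ t'))).comp (σ t') (hgder t')
        rw [hgσ t'] at h1
        exact h1
      have hinv := hcomp.inv (by rw [hgσ t']; exact (hFpos t').ne' :
        F (g (σ t')) ≠ 0)
      rw [hufun]
      refine hinv.congr_deriv (Eq.symm ?_)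
      rw [hgσ t', eq_div_iff (pow_ne_zero 2 (hFpos t').ne')]
      ring
    refine ⟨(hu1 t).differentiableAt, ?_⟩
    have hEvEq : deriv u =ᶠ[nhds (σ t)] fun s => -θ * S (g s) := by
      have hO : Set.Ioo (σ (t - 1)) (σ (t + 1)) ∈ nhds (σ t) :=
        Ioo_mem_nhds (hσmono (by linarith)) (hσmono (by linarith))
      filter_upwards [hO] with s hs
      have hcontσ : ContinuousOn σ (Set.Icc (t - 1) (t + 1)) := fun x _ =>
        ((hσder x).differentiableAt.continuousAt).continuousWithinAt
      obtain ⟨t'', _, ht''⟩ :=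
        intermediate_value_Ioo (by linarith : t - 1 ≤ t + 1) hcontσ hs
      rw [← ht'', (hu1 t'').deriv, hgσ t'']
    have hw : HasDerivAt (fun s => -θ * S (g s))
        (-θ * ((∑ l, deriv (H l) t) * (θ * F t))) (σ t) := by
      have h1 := (hSder (g (σ t))).comp (σ t) (hgder t)
      rw [hgσ t] at h1
      exact HasDerivAt.const_mul (-θ) h1
    refine ⟨hEvEq.differentiableAt_iff.mpr hw.differentiableAt, ?_⟩
    -- final computation
    set A := ∑ pr ∈ Finset.univ.filter (fun pr : Fin d × Fin d => pr.1 < pr.2),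
        H pr.1 t * H pr.2 t with hAdef
    set Q := ∑ l, H l t ^ 2 with hQdef
    set D' := ∑ l, deriv (H l) t with hD'def
    have hne1 : F t ≠ 0 := (hFpos t).ne'
    have hne2 : (d : ℝ) - 1 ≠ 0 := by linarith
    have hd2 : deriv (deriv u) (σ t) = -θ * (D' * (θ * F t)) := by
      rw [hEvEq.deriv_eq, hw.deriv]
    have hut : u (σ t) = 1 / F t := by rw [hu (σ t), hgσ t, hFt t]
    have hψd : deriv ψ (σ t) = deriv φ t * (θ * F t) := by
      have h1 := ((hφ (g (σ t))).hasDerivAt).comp (σ t) (hgder t)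
      rw [hgσ t] at h1
      have h2 : ψ = fun s => φ (g s) := funext hψ
      rw [h2]
      exact h1.deriv
    have hPt : P (σ t) = ((d : ℝ) * κ / ((d : ℝ) - 1)) * (deriv φ t * (θ * F t)) ^ 2 := by
      rw [hP, hψd]
    have hEt : E = -(θ ^ 2 / ((d : ℝ) - 1)) * F t ^ 2 * (((d : ℝ) - 1) * Q - 2 * A) := by
      rw [← hE t, hFt t]
      congr 1
      have h := aux_sqdiff (fun l => H l t)
      rw [← hQdef, ← hAdef] at h
      exact h
    have hsq2 : S t * S t = Q + 2 * A := by
      have h := aux_sq (fun l => H l t)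
      rw [← aux_master (fun l k => H l t * H k t), ← hQdef, ← hAdef] at h
      have hSt : (∑ l, H l t) = S t := rfl
      rw [hSt] at h
      nlinarith [h]
    have hsummed : (d : ℝ) * ((D' + Q) + A) - (D' + Q) - (S t * S t - Q)
        = (d : ℝ) * (-κ * ((deriv φ t) ^ 2 / 2 - V (φ t) + p t) + Λ) := by
      have h1 : ∑ i : Fin d, ((∑ l, (deriv (H l) t + H l t ^ 2))
            - (deriv (H i) t + H i t ^ 2) + (A - H i t * (S t - H i t)))
          = ∑ _i : Fin d, (-κ * ((deriv φ t) ^ 2 / 2 - V (φ t) + p t) + Λ) := by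
        refine Finset.sum_congr rfl fun i _ => ?_
        rw [← hErase i t, ← hAvoid i t]
        exact hIi i t
      have hT : (∑ l, (deriv (H l) t + H l t ^ 2)) = D' + Q := Finset.sum_add_distrib
      have e : ∀ i : Fin d, (∑ l, (deriv (H l) t + H l t ^ 2))
            - (deriv (H i) t + H i t ^ 2) + (A - H i t * (S t - H i t))
          = (D' + Q + A) - (deriv (H i) t + H i t * S t) := by
        intro i
        rw [hT]
        ring
      rw [Finset.sum_congr rfl (fun i _ => e i)] at h1
      rw [Finset.sum_sub_distrib, Finset.sum_const, Finset.card_univ, Fintype.card_fin,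
        nsmul_eq_mul, Finset.sum_add_distrib, ← hD'def, ← Finset.sum_mul,
        Finset.sum_const, Finset.card_univ, Fintype.card_fin, nsmul_eq_mul] at h1
      have hSt : (∑ l, H l t) = S t := rfl
      rw [hSt] at h1
      linarith [h1]
    have hI0' := hI0 t
    rw [← hAdef] at hI0'
    have hscalar : ((d : ℝ) - 1) * D' + ((d : ℝ) - 1) * Q - 2 * A
        + (d : ℝ) * κ * (deriv φ t) ^ 2 + (d : ℝ) * κ * ρ t + (d : ℝ) * κ * p t = 0 := by
      linear_combination hsummed + hsq2 - (d : ℝ) * hI0'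
    rw [hd2, hut, hPt, hEt, hgσ t]
    field_simp
    linear_combination (-1 : ℝ) * hscalar
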